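/- arXiv:1601.05877 — 2 statements merged into one kernel-verified Lean document; each statement's English description precedes it below -/
import Mathlib

section
/- Suppose γ is C², its stiffness γ + γ'' is strictly positive on [0, π], and σ satisfies f(π;σ) < 0 < f(0;σ), where f(θ;σ) = γ(θ)cos θ − γ'(θ)sin θ − σ. Then there exists a unique θ_a ∈ (0, π) with f(θ_a;σ) = 0 (the equilibrium contact angle given by the anisotropic Young equation). -/
open Real

/-- If γ is C², the stiffness γ + γ'' is positive on [0,π], and
f(π;σ) < 0 < f(0;σ), then the anisotropic Young equation f(θ;σ)=0 has a
unique solution θ_a ∈ (0,π). -/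
theorem stmt5 (γ : ℝ → ℝ) (hγ : ContDiff ℝ 2 γ) (σ : ℝ)
    (f : ℝ → ℝ) (hf : f = fun θ => γ θ * Real.cos θ - deriv γ θ * Real.sin θ - σ)
    (hstiff : ∀ θ ∈ Set.Icc (0 : ℝ) π, 0 < γ θ + deriv (deriv γ) θ)
    (hπ : f π < 0) (h0 : 0 < f 0) :
    ∃! θa : ℝ, θa ∈ Set.Ioo (0 : ℝ) π ∧ f θa = 0 := by
  have hγ1 : Differentiable ℝ γ := hγ.differentiable (by norm_num)
  have hγ' : ContDiff ℝ 1 (deriv γ) := (contDiff_succ_iff_deriv.mp (by norm_num [one_add_one_eq_two]; exact hγ : ContDiff ℝ (1+1) γ)).2.2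
  have hγ'd : Differentiable ℝ (deriv γ) := hγ'.differentiable (by norm_num)
  have hfd : ∀ x, HasDerivAt f (-((γ x + deriv (deriv γ) x) * Real.sin x)) x := by
    intro x
    have h1 := ((hγ1 x).hasDerivAt.mul (Real.hasDerivAt_cos x)).sub
      (((hγ'd x).hasDerivAt.mul (Real.hasDerivAt_sin x)))
    have h2 : HasDerivAt (fun θ => γ θ * Real.cos θ - deriv γ θ * Real.sin θ - σ)
        (deriv γ x * Real.cos x + γ x * -Real.sin x -
          (deriv (deriv γ) x * Real.sin x + deriv γ x * Real.cos x)) x := h1.sub_const σ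
    rw [hf]
    convert h2 using 1
    ring
  have hcont : ContinuousOn f (Set.Icc 0 π) := fun x _ => ((hfd x).continuousAt).continuousWithinAt
  have hanti : StrictAntiOn f (Set.Icc 0 π) := by
    apply strictAntiOn_of_deriv_neg (convex_Icc 0 π) hcont
    intro x hx
    rw [interior_Icc] at hx
    rw [(hfd x).deriv]
    have hs : 0 < Real.sin x := Real.sin_pos_of_pos_of_lt_pi hx.1 hx.2
    have := hstiff x ⟨hx.1.le, hx.2.le⟩
    nlinarith
  have hmem : (0 : ℝ) ∈ Set.Ioo (f π) (f 0) := ⟨hπ, h0⟩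
  have := intermediate_value_Ioo' (le_of_lt Real.pi_pos) hcont hmem
  obtain ⟨θa, hθa, hfa⟩ := this
  refine ⟨θa, ⟨hθa, hfa⟩, ?_⟩
  rintro y ⟨hy, hfy⟩
  by_contra hne
  rcases lt_or_gt_of_ne hne with h | h
  · have := hanti (Set.mem_Icc_of_Ioo hy) (Set.mem_Icc_of_Ioo hθa) h
    rw [hfy, hfa] at this; exact lt_irrefl 0 this
  · have := hanti (Set.mem_Icc_of_Ioo hθa) (Set.mem_Icc_of_Ioo hy) h
    rw [hfy, hfa] at this; exact lt_irrefl 0 this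
end

section
/- If (X, μ, κ) is a weak solution of the variational formulation of the sharp-interface solid-state dewetting model with isotropic or weakly anisotropic surface energy (equations ⟨∂_t X, φ n⟩_Γ + ⟨∂_s μ, ∂_s φ⟩_Γ = 0 for all φ ∈ H¹, together with the contact point condition y(0,t)=y(1,t)=0), then the total mass A(t) = ∫₀¹ y ∂_ρ x dρ is conserved: A(t) = A(0) for all t ≥ 0. -/
open Real intervalIntegral MeasureTheory Set Metric
open Real intervalIntegral MeasureTheory Set Metric

noncomputable def pd1 (f : ℝ × ℝ → ℝ) (q : ℝ × ℝ) : ℝ := fderiv ℝ f q (1, 0)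
noncomputable def pd2 (f : ℝ × ℝ → ℝ) (q : ℝ × ℝ) : ℝ := fderiv ℝ f q (0, 1)
noncomputable def pd12 (f : ℝ × ℝ → ℝ) (q : ℝ × ℝ) : ℝ := fderiv ℝ (pd1 f) q (0, 1)

lemma hasDerivAt_pd2 (f : ℝ × ℝ → ℝ) (hf : Differentiable ℝ f) (t ρ : ℝ) :
    HasDerivAt (fun r => f (t, r)) (pd2 f (t, ρ)) ρ := by
  have h1 : HasDerivAt (fun r : ℝ => ((t, r) : ℝ × ℝ)) (0, 1) ρ :=
    (hasDerivAt_const ρ t).prodMk (hasDerivAt_id ρ)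
  exact (hf (t, ρ)).hasFDerivAt.comp_hasDerivAt ρ h1

lemma hasDerivAt_pd1 (f : ℝ × ℝ → ℝ) (hf : Differentiable ℝ f) (t ρ : ℝ) :
    HasDerivAt (fun τ => f (τ, ρ)) (pd1 f (t, ρ)) t := by
  have h1 : HasDerivAt (fun τ : ℝ => ((τ, ρ) : ℝ × ℝ)) (1, 0) t :=
    (hasDerivAt_id t).prodMk (hasDerivAt_const t ρ)
  exact (hf (t, ρ)).hasFDerivAt.comp_hasDerivAt t h1

lemma contDiff_pdApply (f : ℝ × ℝ → ℝ) (hf : ContDiff ℝ 2 f) (v : ℝ × ℝ) :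
    ContDiff ℝ 1 (fun q => fderiv ℝ f q v) :=
  (ContinuousLinearMap.apply ℝ ℝ v).contDiff.comp (hf.fderiv_right (m := 1) (by norm_num))

lemma contDiff_pd1 (f : ℝ × ℝ → ℝ) (hf : ContDiff ℝ 2 f) : ContDiff ℝ 1 (pd1 f) :=
  contDiff_pdApply f hf _

lemma contDiff_pd2 (f : ℝ × ℝ → ℝ) (hf : ContDiff ℝ 2 f) : ContDiff ℝ 1 (pd2 f) :=
  contDiff_pdApply f hf _

lemma continuous_pd12 (f : ℝ × ℝ → ℝ) (hf : ContDiff ℝ 2 f) : Continuous (pd12 f) := by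
  have h : ContDiff ℝ 0 (fderiv ℝ (pd1 f)) :=
    (contDiff_pd1 f hf).fderiv_right (m := 0) (by norm_num)
  exact (ContinuousLinearMap.apply ℝ ℝ ((0:ℝ), (1:ℝ))).continuous.comp h.continuous

lemma pd_symm (f : ℝ × ℝ → ℝ) (hf : ContDiff ℝ 2 f) (p : ℝ × ℝ) :
    pd1 (pd2 f) p = pd12 f p := by
  have hdiff : DifferentiableAt ℝ (fderiv ℝ f) p :=
    ((hf.fderiv_right (m := 1) (by norm_num)).differentiable (by norm_num)) p
  have key : ∀ v : ℝ × ℝ, fderiv ℝ (fun q => fderiv ℝ f q v) p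
      = (ContinuousLinearMap.apply ℝ ℝ v).comp (fderiv ℝ (fderiv ℝ f) p) :=
    fun v => ((ContinuousLinearMap.apply ℝ ℝ v).hasFDerivAt.comp p hdiff.hasFDerivAt).fderiv
  have hsymm : IsSymmSndFDerivAt ℝ f p :=
    hf.contDiffAt.isSymmSndFDerivAt (by norm_num)
  show fderiv ℝ (fun q => fderiv ℝ f q (0,1)) p (1,0)
      = fderiv ℝ (fun q => fderiv ℝ f q (1,0)) p (0,1)
  rw [key, key]
  simpa using hsymm.eq (1,0) (0,1)

lemma hasDerivAt_pd1_snd (f : ℝ × ℝ → ℝ) (hf : ContDiff ℝ 2 f) (t ρ : ℝ) :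
    HasDerivAt (fun r => pd1 f (t, r)) (pd12 f (t, ρ)) ρ :=
  hasDerivAt_pd2 (pd1 f) ((contDiff_pd1 f hf).differentiable one_ne_zero) t ρ

lemma hasDerivAt_pd2_fst (f : ℝ × ℝ → ℝ) (hf : ContDiff ℝ 2 f) (t ρ : ℝ) :
    HasDerivAt (fun τ => pd2 f (τ, ρ)) (pd12 f (t, ρ)) t := by
  have := hasDerivAt_pd1 (pd2 f) ((contDiff_pd2 f hf).differentiable one_ne_zero) t ρ
  rwa [pd_symm f hf] at this

/-- Mass conservation for weak solutions of the sharp-interface solid-state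
dewetting model: if the weak surface-diffusion equation
⟨∂_t X · n, φ⟩_Γ + ⟨∂_s μ, ∂_s φ⟩_Γ = 0 holds for all C¹ test functions φ and
y vanishes at both contact points, then A(t) = ∫₀¹ y ∂_ρx dρ is conserved. -/
theorem stmt7 (x y μ : ℝ → ℝ → ℝ)
    (hx : ContDiff ℝ 2 (Function.uncurry x))
    (hy : ContDiff ℝ 2 (Function.uncurry y))
    (hμ : ∀ t, ContDiff ℝ 1 (μ t))
    (hreg : ∀ t ρ, (deriv (x t) ρ, deriv (y t) ρ) ≠ (0, 0))
    (hbc : ∀ t, y t 0 = 0 ∧ y t 1 = 0)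
    (hweak : ∀ t ≥ (0 : ℝ), ∀ φ : ℝ → ℝ, ContDiff ℝ 1 φ →
      (∫ ρ in (0 : ℝ)..1,
        (deriv (fun τ => x τ ρ) t * (-(deriv (y t) ρ))
          + deriv (fun τ => y τ ρ) t * deriv (x t) ρ) * φ ρ)
      + (∫ ρ in (0 : ℝ)..1,
          deriv (μ t) ρ * deriv φ ρ
            / Real.sqrt ((deriv (x t) ρ) ^ 2 + (deriv (y t) ρ) ^ 2)) = 0) :
    ∀ t ≥ (0 : ℝ),
      (∫ ρ in (0 : ℝ)..1, y t ρ * deriv (x t) ρ)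
        = ∫ ρ in (0 : ℝ)..1, y 0 ρ * deriv (x 0) ρ := by
  intro t ht
  set fx := Function.uncurry x with hfxdef
  set fy := Function.uncurry y with hfydef
  have hdx : Differentiable ℝ fx := hx.differentiable (by norm_num)
  have hdy : Differentiable ℝ fy := hy.differentiable (by norm_num)
  -- identification of derivs with partial derivatives
  have dρx : ∀ τ ρ, deriv (x τ) ρ = pd2 fx (τ, ρ) :=
    fun τ ρ => (hasDerivAt_pd2 fx hdx τ ρ).deriv
  have dρy : ∀ τ ρ, deriv (y τ) ρ = pd2 fy (τ, ρ) :=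
    fun τ ρ => (hasDerivAt_pd2 fy hdy τ ρ).deriv
  have dτx : ∀ τ ρ, deriv (fun σ => x σ ρ) τ = pd1 fx (τ, ρ) :=
    fun τ ρ => (hasDerivAt_pd1 fx hdx τ ρ).deriv
  have dτy : ∀ τ ρ, deriv (fun σ => y σ ρ) τ = pd1 fy (τ, ρ) :=
    fun τ ρ => (hasDerivAt_pd1 fy hdy τ ρ).deriv
  -- continuity facts
  have cfy : Continuous fy := hy.continuous
  have cp2x : Continuous (pd2 fx) := (contDiff_pd2 fx hx).continuous
  have cp1x : Continuous (pd1 fx) := (contDiff_pd1 fx hx).continuous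
  have cp1y : Continuous (pd1 fy) := (contDiff_pd1 fy hy).continuous
  have cp2y : Continuous (pd2 fy) := (contDiff_pd2 fy hy).continuous
  have c12x : Continuous (pd12 fx) := continuous_pd12 fx hx
  have contG' : Continuous (fun p : ℝ × ℝ => pd1 fy p * pd2 fx p + fy p * pd12 fx p) :=
    (cp1y.mul cp2x).add (cfy.mul c12x)
  -- differentiation under the integral sign
  have key : ∀ t₀ : ℝ,
      HasDerivAt (fun τ => ∫ ρ in (0:ℝ)..1, fy (τ, ρ) * pd2 fx (τ, ρ))
        (∫ ρ in (0:ℝ)..1,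
          (pd1 fy (t₀, ρ) * pd2 fx (t₀, ρ) + fy (t₀, ρ) * pd12 fx (t₀, ρ))) t₀ := by
    intro t₀
    obtain ⟨C, hC⟩ := ((isCompact_Icc.prod isCompact_Icc) :
        IsCompact (Icc (t₀ - 1) (t₀ + 1) ×ˢ Icc (-1 : ℝ) 2)).exists_bound_of_continuousOn
      contG'.continuousOn
    have hmem : ∀ ρ ∈ Set.uIoc (0:ℝ) 1, ∀ τ ∈ ball t₀ 1,
        ((τ, ρ) : ℝ × ℝ) ∈ Icc (t₀ - 1) (t₀ + 1) ×ˢ Icc (-1 : ℝ) 2 := by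
      intro ρ hρ τ hτ
      rw [Set.uIoc_of_le (by norm_num : (0:ℝ) ≤ 1)] at hρ
      have h1 : |τ - t₀| < 1 := by simpa [Real.dist_eq] using hτ
      have h1' := abs_lt.1 h1
      exact ⟨⟨by linarith [h1'.1], by linarith [h1'.2]⟩,
        ⟨by linarith [hρ.1], by linarith [hρ.2]⟩⟩
    have := intervalIntegral.hasDerivAt_integral_of_dominated_loc_of_deriv_le
      (F := fun τ ρ => fy (τ, ρ) * pd2 fx (τ, ρ))
      (F' := fun τ ρ => pd1 fy (τ, ρ) * pd2 fx (τ, ρ) + fy (τ, ρ) * pd12 fx (τ, ρ))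
      (x₀ := t₀) (a := (0:ℝ)) (b := 1) (μ := volume) (bound := fun _ => C)
      (s := ball t₀ 1) (ball_mem_nhds t₀ one_pos)
      (Filter.Eventually.of_forall fun τ =>
        (((cfy.mul cp2x).comp (Continuous.prodMk_right τ)).aestronglyMeasurable))
      (((cfy.mul cp2x).comp (Continuous.prodMk_right t₀)).intervalIntegrable 0 1)
      ((contG'.comp (Continuous.prodMk_right t₀)).aestronglyMeasurable)
      (Filter.Eventually.of_forall fun ρ hρ τ hτ => hC (τ, ρ) (hmem ρ hρ τ hτ))
      (intervalIntegrable_const)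
      (Filter.Eventually.of_forall fun ρ _ τ _ =>
        (hasDerivAt_pd1 fy hdy τ ρ).mul (hasDerivAt_pd2_fst fx hx τ ρ))
    exact this.2
  -- the derivative vanishes for t₀ ≥ 0
  have deriv_zero : ∀ t₀ ≥ (0:ℝ),
      (∫ ρ in (0:ℝ)..1,
        (pd1 fy (t₀, ρ) * pd2 fx (t₀, ρ) + fy (t₀, ρ) * pd12 fx (t₀, ρ))) = 0 := by
    intro t₀ ht₀
    have hw := hweak t₀ ht₀ (fun _ => 1) contDiff_const
    have h2 : (∫ ρ in (0:ℝ)..1,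
        deriv (μ t₀) ρ * deriv (fun _ => (1:ℝ)) ρ
          / Real.sqrt ((deriv (x t₀) ρ) ^ 2 + (deriv (y t₀) ρ) ^ 2)) = 0 := by
      simp
    rw [h2, add_zero] at hw
    have hcongr : (∫ ρ in (0:ℝ)..1,
        (pd1 fx (t₀, ρ) * (-(pd2 fy (t₀, ρ))) + pd1 fy (t₀, ρ) * pd2 fx (t₀, ρ)))
        = ∫ ρ in (0:ℝ)..1,
          (deriv (fun τ => x τ ρ) t₀ * (-(deriv (y t₀) ρ))
            + deriv (fun τ => y τ ρ) t₀ * deriv (x t₀) ρ) * (fun _ => (1:ℝ)) ρ := by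
      apply intervalIntegral.integral_congr
      intro ρ _
      beta_reduce
      rw [dτx, dτy, dρx, dρy]
      ring
    have hw' := hcongr.trans hw
    -- integrability of the pieces
    have int1 : IntervalIntegrable (fun ρ => pd1 fy (t₀, ρ) * pd2 fx (t₀, ρ)) volume 0 1 :=
      ((cp1y.comp (Continuous.prodMk_right t₀)).mul
        (cp2x.comp (Continuous.prodMk_right t₀))).intervalIntegrable 0 1
    have int2 : IntervalIntegrable (fun ρ => fy (t₀, ρ) * pd12 fx (t₀, ρ)) volume 0 1 :=
      ((cfy.comp (Continuous.prodMk_right t₀)).mul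
        (c12x.comp (Continuous.prodMk_right t₀))).intervalIntegrable 0 1
    have int3 : IntervalIntegrable (fun ρ => pd2 fy (t₀, ρ) * pd1 fx (t₀, ρ)) volume 0 1 :=
      ((cp2y.comp (Continuous.prodMk_right t₀)).mul
        (cp1x.comp (Continuous.prodMk_right t₀))).intervalIntegrable 0 1
    -- integration by parts on the mixed term
    have ibp : (∫ ρ in (0:ℝ)..1, fy (t₀, ρ) * pd12 fx (t₀, ρ))
        = fy (t₀, 1) * pd1 fx (t₀, 1) - fy (t₀, 0) * pd1 fx (t₀, 0)
          - ∫ ρ in (0:ℝ)..1, pd2 fy (t₀, ρ) * pd1 fx (t₀, ρ) := by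
      apply intervalIntegral.integral_mul_deriv_eq_deriv_mul
        (fun ρ _ => hasDerivAt_pd2 fy hdy t₀ ρ)
        (fun ρ _ => hasDerivAt_pd1_snd fx hx t₀ ρ)
        ((cp2y.comp (Continuous.prodMk_right t₀)).intervalIntegrable 0 1)
        ((c12x.comp (Continuous.prodMk_right t₀)).intervalIntegrable 0 1)
    have hb0 : fy (t₀, (0:ℝ)) = 0 := (hbc t₀).1
    have hb1 : fy (t₀, (1:ℝ)) = 0 := (hbc t₀).2
    rw [hb0, hb1] at ibp
    simp only [zero_mul, sub_zero, zero_sub] at ibp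
    rw [intervalIntegral.integral_add int1 int2, ibp]
    have hsub : (∫ ρ in (0:ℝ)..1, pd1 fy (t₀, ρ) * pd2 fx (t₀, ρ))
        - (∫ ρ in (0:ℝ)..1, pd2 fy (t₀, ρ) * pd1 fx (t₀, ρ))
        = ∫ ρ in (0:ℝ)..1,
          (pd1 fx (t₀, ρ) * (-(pd2 fy (t₀, ρ))) + pd1 fy (t₀, ρ) * pd2 fx (t₀, ρ)) := by
      rw [← intervalIntegral.integral_sub int1 int3]
      apply intervalIntegral.integral_congr
      intro ρ _
      beta_reduce
      ring
    linarith [hsub, hw']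
  -- rewrite the goal in terms of fy, pd2 fx
  have hA : ∀ τ : ℝ, (∫ ρ in (0:ℝ)..1, y τ ρ * deriv (x τ) ρ)
      = ∫ ρ in (0:ℝ)..1, fy (τ, ρ) * pd2 fx (τ, ρ) := by
    intro τ
    apply intervalIntegral.integral_congr
    intro ρ _
    beta_reduce
    rw [dρx]
    rfl
  rw [hA t, hA 0]
  -- constancy from vanishing right derivative
  have hconst := constant_of_has_deriv_right_zero
    (f := fun τ => ∫ ρ in (0:ℝ)..1, fy (τ, ρ) * pd2 fx (τ, ρ)) (a := 0) (b := t)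
    (fun τ _ => ((key τ).continuousAt).continuousWithinAt)
    (fun τ hτ => by
      have h0 := key τ
      rw [deriv_zero τ hτ.1] at h0
      exact h0.hasDerivWithinAt)
  exact hconst t ⟨ht, le_refl t⟩
end
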